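/- Let Ω ∈ S², κ > 0, M_Ω the von Mises density with normalized measure on S², h integrable, and S a symmetric 3×3 matrix. Then ∫_{S²} (S : (Id − 3ω⊗ω)) h(ω·Ω) M_Ω(ω) P_{Ω⊥}(ω) dω = −6 C₂ P_{Ω⊥} S Ω, where C₂ = (1/4)∫₀^π cosθ sin³θ h(cosθ) M̃(θ) dθ. -/

import Mathlib

open Real

/-- The orthogonal projection matrix `P_{x⊥} = Id - x ⊗ x`. -/
noncomputable def projMat (x : Fin 3 → ℝ) : Fin 3 → Fin 3 → ℝ :=
  fun i j => (if i = j then (1 : ℝ) else 0) - x i * x j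

/-- Parametrization of the unit sphere adapted to `Ω` via an orthonormal frame. -/
noncomputable def ωpar (Ω e₁ e₂ : Fin 3 → ℝ) (θ φ : ℝ) : Fin 3 → ℝ :=
  fun i => Real.sin θ * Real.cos φ * e₁ i + Real.sin θ * Real.sin φ * e₂ i + Real.cos θ * Ω i

/-- Normalizing constant of the von Mises density for `∫_{S²} dω = 1`. -/
noncomputable def Znorm (κ : ℝ) : ℝ :=
  (1/2) * ∫ θ in (0:ℝ)..π, Real.exp (κ * Real.cos θ) * Real.sin θ

/-- `C₂ = (1/4)∫₀^π cosθ sin³θ h(cosθ) M̃(θ) dθ`. -/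
noncomputable def Ctwo (h : ℝ → ℝ) (κ : ℝ) : ℝ :=
  (1/4) * ∫ θ in (0:ℝ)..π,
    Real.cos θ * Real.sin θ ^ 3 * h (Real.cos θ) * (Real.exp (κ * Real.cos θ) / Znorm κ)

lemma int_cos_combo (a b c d e f : ℝ) :
    ∫ x in (0:ℝ)..(2*π), (a*Real.cos x + b*Real.cos x^3 + c*Real.sin x^2*Real.cos x
      + d*Real.sin x*Real.cos x^2 + e*Real.cos x^2 + f*Real.sin x*Real.cos x) = e*π := by
  have hG : ∀ x : ℝ, HasDerivAt (fun y => a*Real.sin y + b*(Real.sin y - Real.sin y^3/3)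
      + c*(Real.sin y^3/3) - d*(Real.cos y^3/3) + e*(y/2 + Real.sin y * Real.cos y/2)
      + f*(Real.sin y^2/2))
      (a*Real.cos x + b*Real.cos x^3 + c*Real.sin x^2*Real.cos x
      + d*Real.sin x*Real.cos x^2 + e*Real.cos x^2 + f*Real.sin x*Real.cos x) x := by
    intro x
    have hs := Real.hasDerivAt_sin x
    have hc := Real.hasDerivAt_cos x
    have hs3 := hs.pow 3
    have hc3 := hc.pow 3
    have hsc := hs.mul hc
    have hs2 := hs.pow 2
    have hid := hasDerivAt_id' (x := x)
    have H := (((((hs.const_mul a).add ((hs.sub (hs3.div_const 3)).const_mul b)).add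
      ((hs3.div_const 3).const_mul c)).sub ((hc3.div_const 3).const_mul d)).add
      (((hid.div_const 2).add (hsc.div_const 2)).const_mul e)).add
      ((hs2.div_const 2).const_mul f)
    refine H.congr_deriv (Eq.symm ?_)
    have hpyth := Real.sin_sq_add_cos_sq x
    push_cast
    linear_combination (b*Real.cos x + e/2) * hpyth
  rw [intervalIntegral.integral_eq_sub_of_hasDerivAt (fun x _ => hG x)
    (by apply Continuous.intervalIntegrable; continuity)]
  simp [Real.sin_two_pi, Real.cos_two_pi]

lemma int_sin_combo (a b c d e f : ℝ) :
    ∫ x in (0:ℝ)..(2*π), (a*Real.sin x + b*Real.cos x^2*Real.sin x + c*Real.sin x^3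
      + d*Real.sin x^2*Real.cos x + e*Real.sin x*Real.cos x + f*Real.sin x^2) = f*π := by
  have hG : ∀ x : ℝ, HasDerivAt (fun y => -(a*Real.cos y) - b*(Real.cos y^3/3)
      + c*(Real.cos y^3/3 - Real.cos y) + d*(Real.sin y^3/3) + e*(Real.sin y^2/2)
      + f*(y/2 - Real.sin y * Real.cos y/2))
      (a*Real.sin x + b*Real.cos x^2*Real.sin x + c*Real.sin x^3
      + d*Real.sin x^2*Real.cos x + e*Real.sin x*Real.cos x + f*Real.sin x^2) x := by
    intro x
    have hs := Real.hasDerivAt_sin x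
    have hc := Real.hasDerivAt_cos x
    have hs3 := hs.pow 3
    have hc3 := hc.pow 3
    have hsc := hs.mul hc
    have hs2 := hs.pow 2
    have hid := hasDerivAt_id' (x := x)
    have H := ((((((hc.const_mul a).neg.sub ((hc3.div_const 3).const_mul b)).add
      (((hc3.div_const 3).sub hc).const_mul c)).add ((hs3.div_const 3).const_mul d)).add
      ((hs2.div_const 2).const_mul e)).add
      (((hid.div_const 2).sub (hsc.div_const 2)).const_mul f))
    refine H.congr_deriv (Eq.symm ?_)
    have hpyth := Real.sin_sq_add_cos_sq x
    push_cast
    linear_combination (c*Real.sin x + f/2) * hpyth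
  rw [intervalIntegral.integral_eq_sub_of_hasDerivAt (fun x _ => hG x)
    (by apply Continuous.intervalIntegrable; continuity)]
  simp [Real.sin_two_pi, Real.cos_two_pi]

open Matrix in
lemma frame_complete (e₁ e₂ Ω : Fin 3 → ℝ)
    (h1 : ∑ i, e₁ i * e₁ i = 1) (h2 : ∑ i, e₂ i * e₂ i = 1) (hΩ : ∑ i, Ω i * Ω i = 1)
    (h12 : ∑ i, e₁ i * e₂ i = 0) (h1Ω : ∑ i, e₁ i * Ω i = 0) (h2Ω : ∑ i, e₂ i * Ω i = 0) :
    ∀ i j, e₁ i * e₁ j + e₂ i * e₂ j + Ω i * Ω j = if i = j then (1:ℝ) else 0 := by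
  simp only [Fin.sum_univ_three] at h1 h2 hΩ h12 h1Ω h2Ω
  set A : Matrix (Fin 3) (Fin 3) ℝ :=
    !![e₁ 0, e₁ 1, e₁ 2; e₂ 0, e₂ 1, e₂ 2; Ω 0, Ω 1, Ω 2] with hA
  have hAT : Aᵀ = !![e₁ 0, e₂ 0, Ω 0; e₁ 1, e₂ 1, Ω 1; e₁ 2, e₂ 2, Ω 2] := by
    ext i j
    fin_cases i <;> fin_cases j <;> simp [hA]
  have hAAT : A * Aᵀ = 1 := by
    rw [hAT]
    ext i j
    fin_cases i <;> fin_cases j <;>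
      simp [hA, Matrix.mul_apply, Fin.sum_univ_three, Matrix.one_apply] <;>
      first
      | linear_combination h1
      | linear_combination h2
      | linear_combination hΩ
      | linear_combination h12
      | linear_combination h1Ω
      | linear_combination h2Ω
  have hATA : Aᵀ * A = 1 := mul_eq_one_comm.mp hAAT
  rw [hAT] at hATA
  intro i j
  have := congrFun (congrFun hATA i) j
  fin_cases i <;> fin_cases j <;>
    simpa [hA, Matrix.mul_apply, Fin.sum_univ_three, Matrix.one_apply] using this

/-- `∫_{S²} (S : (Id − 3ω⊗ω)) h(ω·Ω) M_Ω(ω) P_{Ω⊥}(ω) dω = −6 C₂ P_{Ω⊥} S Ω`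
for a symmetric matrix `S`, with the normalized sphere measure. -/
theorem stmt11 (κ : ℝ) (hκ : 0 < κ) (h : ℝ → ℝ) (hh : Continuous h)
    (S : Fin 3 → Fin 3 → ℝ) (hS : ∀ i j, S i j = S j i)
    (Ω e₁ e₂ : Fin 3 → ℝ)
    (h1 : ∑ i, e₁ i * e₁ i = 1) (h2 : ∑ i, e₂ i * e₂ i = 1) (hΩ : ∑ i, Ω i * Ω i = 1)
    (h12 : ∑ i, e₁ i * e₂ i = 0) (h1Ω : ∑ i, e₁ i * Ω i = 0) (h2Ω : ∑ i, e₂ i * Ω i = 0) :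
    ((4 * π)⁻¹ • (∫ θ in (0:ℝ)..π, ∫ φ in (0:ℝ)..(2 * π),
      (Real.sin θ * h (Real.cos θ) * (Real.exp (κ * Real.cos θ) / Znorm κ) *
        (∑ i, ∑ j, S i j * ((if i = j then (1:ℝ) else 0) -
          3 * ωpar Ω e₁ e₂ θ φ i * ωpar Ω e₁ e₂ θ φ j))) •
      (fun i => ωpar Ω e₁ e₂ θ φ i -
        (∑ j, ωpar Ω e₁ e₂ θ φ j * Ω j) * Ω i : Fin 3 → ℝ)))
    = (-6 * Ctwo h κ) • (fun i => ∑ j, projMat Ω i j * (∑ k, S j k * Ω k)) := by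
  have hcomp := frame_complete e₁ e₂ Ω h1 h2 hΩ h12 h1Ω h2Ω
  simp only [Fin.sum_univ_three] at h1 h2 hΩ h12 h1Ω h2Ω
  set q11 : ℝ := ∑ i, ∑ j, S i j * e₁ i * e₁ j with hq11
  set q22 : ℝ := ∑ i, ∑ j, S i j * e₂ i * e₂ j with hq22
  set q33 : ℝ := ∑ i, ∑ j, S i j * Ω i * Ω j with hq33
  set q12 : ℝ := ∑ i, ∑ j, S i j * e₁ i * e₂ j with hq12
  set q13 : ℝ := ∑ i, ∑ j, S i j * e₁ i * Ω j with hq13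
  set q23 : ℝ := ∑ i, ∑ j, S i j * e₂ i * Ω j with hq23
  -- the von Mises weight
  set M : ℝ → ℝ := fun θ => Real.sin θ * h (Real.cos θ) * (Real.exp (κ * Real.cos θ) / Znorm κ)
    with hM
  -- the Ctwo integrand
  set F : ℝ → ℝ := fun θ =>
    Real.cos θ * Real.sin θ ^ 3 * h (Real.cos θ) * (Real.exp (κ * Real.cos θ) / Znorm κ)
    with hF
  have hdot : ∀ θ φ : ℝ, (∑ j, ωpar Ω e₁ e₂ θ φ j * Ω j) = Real.cos θ := by
    intro θ φ
    simp only [ωpar, Fin.sum_univ_three]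
    linear_combination (Real.sin θ * Real.cos φ) * h1Ω + (Real.sin θ * Real.sin φ) * h2Ω
      + Real.cos θ * hΩ
  have hQ : ∀ θ φ : ℝ,
      (∑ i, ∑ j, S i j * ((if i = j then (1:ℝ) else 0) -
          3 * ωpar Ω e₁ e₂ θ φ i * ωpar Ω e₁ e₂ θ φ j))
      = (S 0 0 + S 1 1 + S 2 2) - 3*(q11*(Real.sin θ*Real.cos φ)^2
        + q22*(Real.sin θ*Real.sin φ)^2 + q33*Real.cos θ^2
        + 2*q12*(Real.sin θ*Real.cos φ)*(Real.sin θ*Real.sin φ)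
        + 2*q13*(Real.sin θ*Real.cos φ)*Real.cos θ
        + 2*q23*(Real.sin θ*Real.sin φ)*Real.cos θ) := by
    intro θ φ
    rw [hq11, hq22, hq33, hq12, hq13, hq23]
    simp only [ωpar, Fin.sum_univ_three]
    norm_num [Fin.ext_iff]
    rw [hS 1 0, hS 2 0, hS 2 1]
    ring
  -- inner integral
  have hinner : ∀ θ : ℝ,
      (∫ φ in (0:ℝ)..(2 * π),
        (Real.sin θ * h (Real.cos θ) * (Real.exp (κ * Real.cos θ) / Znorm κ) *
          (∑ i, ∑ j, S i j * ((if i = j then (1:ℝ) else 0) -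
            3 * ωpar Ω e₁ e₂ θ φ i * ωpar Ω e₁ e₂ θ φ j))) •
        (fun i => ωpar Ω e₁ e₂ θ φ i -
          (∑ j, ωpar Ω e₁ e₂ θ φ j * Ω j) * Ω i : Fin 3 → ℝ))
      = ((-6 * π * q13) * F θ) • e₁ + ((-6 * π * q23) * F θ) • e₂ := by
    intro θ
    set CA : ℝ := Real.sin θ * h (Real.cos θ) * (Real.exp (κ * Real.cos θ) / Znorm κ)
      * Real.sin θ * ((S 0 0 + S 1 1 + S 2 2) - 3*q33*Real.cos θ^2) with hCA
    set CB : ℝ := Real.sin θ * h (Real.cos θ) * (Real.exp (κ * Real.cos θ) / Znorm κ)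
      * Real.sin θ * (-3*q11*Real.sin θ^2) with hCB
    set CC : ℝ := Real.sin θ * h (Real.cos θ) * (Real.exp (κ * Real.cos θ) / Znorm κ)
      * Real.sin θ * (-3*q22*Real.sin θ^2) with hCC
    set CD : ℝ := Real.sin θ * h (Real.cos θ) * (Real.exp (κ * Real.cos θ) / Znorm κ)
      * Real.sin θ * (-6*q12*Real.sin θ^2) with hCD
    set CE : ℝ := Real.sin θ * h (Real.cos θ) * (Real.exp (κ * Real.cos θ) / Znorm κ)
      * Real.sin θ * (-6*q13*Real.sin θ*Real.cos θ) with hCE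
    set CF : ℝ := Real.sin θ * h (Real.cos θ) * (Real.exp (κ * Real.cos θ) / Znorm κ)
      * Real.sin θ * (-6*q23*Real.sin θ*Real.cos θ) with hCF
    have step1 : ∀ φ : ℝ,
        ((Real.sin θ * h (Real.cos θ) * (Real.exp (κ * Real.cos θ) / Znorm κ) *
          (∑ i, ∑ j, S i j * ((if i = j then (1:ℝ) else 0) -
            3 * ωpar Ω e₁ e₂ θ φ i * ωpar Ω e₁ e₂ θ φ j))) •
        (fun i => ωpar Ω e₁ e₂ θ φ i -
          (∑ j, ωpar Ω e₁ e₂ θ φ j * Ω j) * Ω i : Fin 3 → ℝ))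
        = (CA*Real.cos φ + CB*Real.cos φ^3 + CC*Real.sin φ^2*Real.cos φ
            + CD*Real.sin φ*Real.cos φ^2 + CE*Real.cos φ^2 + CF*Real.sin φ*Real.cos φ) • e₁
          + (CA*Real.sin φ + CB*Real.cos φ^2*Real.sin φ + CC*Real.sin φ^3
            + CD*Real.sin φ^2*Real.cos φ + CE*Real.sin φ*Real.cos φ + CF*Real.sin φ^2) • e₂ := by
      intro φ
      funext i
      simp only [Pi.add_apply, Pi.smul_apply, smul_eq_mul]
      rw [hCA, hCB, hCC, hCD, hCE, hCF, hQ θ φ, hdot θ φ]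
      simp only [ωpar]
      ring
    have hi1 : IntervalIntegrable (fun φ =>
        (CA*Real.cos φ + CB*Real.cos φ^3 + CC*Real.sin φ^2*Real.cos φ
          + CD*Real.sin φ*Real.cos φ^2 + CE*Real.cos φ^2 + CF*Real.sin φ*Real.cos φ) • e₁)
        MeasureTheory.volume 0 (2*π) := by
      apply Continuous.intervalIntegrable
      apply Continuous.fun_smul _ continuous_const
      fun_prop
    have hi2 : IntervalIntegrable (fun φ =>
        (CA*Real.sin φ + CB*Real.cos φ^2*Real.sin φ + CC*Real.sin φ^3
          + CD*Real.sin φ^2*Real.cos φ + CE*Real.sin φ*Real.cos φ + CF*Real.sin φ^2) • e₂)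
        MeasureTheory.volume 0 (2*π) := by
      apply Continuous.intervalIntegrable
      apply Continuous.fun_smul _ continuous_const
      fun_prop
    rw [intervalIntegral.integral_congr (fun φ _ => step1 φ),
      intervalIntegral.integral_add hi1 hi2,
      intervalIntegral.integral_smul_const, intervalIntegral.integral_smul_const,
      int_cos_combo, int_sin_combo]
    rw [show CE * π = (-6 * π * q13) * F θ by simp only [hF]; rw [hCE]; ring,
      show CF * π = (-6 * π * q23) * F θ by simp only [hF]; rw [hCF]; ring]
  rw [intervalIntegral.integral_congr (g := fun θ =>
    ((-6 * π * q13) * F θ) • e₁ + ((-6 * π * q23) * F θ) • e₂) (fun θ _ => hinner θ)]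
  have hFc : Continuous F := by
    rw [hF]
    exact ((Real.continuous_cos.mul ((Real.continuous_sin.pow 3))).mul
      (hh.comp Real.continuous_cos)).mul
      ((Real.continuous_exp.comp (continuous_const.mul Real.continuous_cos)).div_const _)
  have hFI : ∫ θ in (0:ℝ)..π, F θ = 4 * Ctwo h κ := by
    rw [Ctwo, hF]; ring
  have hint1 : IntervalIntegrable (fun θ => ((-6 * π * q13) * F θ) • e₁)
      MeasureTheory.volume 0 π :=
    (((continuous_const.mul hFc).smul continuous_const)).intervalIntegrable _ _
  have hint2 : IntervalIntegrable (fun θ => ((-6 * π * q23) * F θ) • e₂)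
      MeasureTheory.volume 0 π :=
    (((continuous_const.mul hFc).smul continuous_const)).intervalIntegrable _ _
  rw [intervalIntegral.integral_add hint1 hint2,
    intervalIntegral.integral_smul_const, intervalIntegral.integral_smul_const,
    intervalIntegral.integral_const_mul, intervalIntegral.integral_const_mul, hFI]
  funext i
  have hproj : (∑ j, projMat Ω i j * (∑ k, S j k * Ω k)) = q13 * e₁ i + q23 * e₂ i := by
    rw [hq13, hq23]
    have hc0 := hcomp i 0
    have hc1 := hcomp i 1
    have hc2 := hcomp i 2
    fin_cases i <;>
      simp only [Fin.sum_univ_three, projMat] at * <;>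
      norm_num at hc0 hc1 hc2 ⊢ <;>
      linear_combination (-(S 0 0 * Ω 0 + S 0 1 * Ω 1 + S 0 2 * Ω 2)) * hc0
        + (-(S 1 0 * Ω 0 + S 1 1 * Ω 1 + S 1 2 * Ω 2)) * hc1
        + (-(S 2 0 * Ω 0 + S 2 1 * Ω 1 + S 2 2 * Ω 2)) * hc2
  simp only [Pi.smul_apply, Pi.add_apply, smul_eq_mul]
  rw [hproj]
  have hπ : π ≠ 0 := Real.pi_ne_zero
  field_simp
  ring
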